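/- Let σ be a primitive substitution prolongable on a letter a such that x = σ^∞(a) is non-periodic, and let u be a non-empty prefix of x satisfying that u is a prefix of σ(u). Then the return substitution σ_u (the unique substitution with Θ_{x,u} ∘ σ_u = σ ∘ Θ_{x,u}) satisfies |σ_u| ≤ |σ|·K_σ², where K_σ is a linear recurrence constant for x. -/

import Mathlib

/-- The factor of the sequence `x` starting at position `i` of length `n`. -/
def seqWord {A : Type*} (x : ℕ → A) (i n : ℕ) : List A :=
  (List.range n).map (fun k => x (i + k))

/-- The word `u` occurs in the sequence `x` at position `i`. -/
def occursAt {A : Type*} (x : ℕ → A) (u : List A) (i : ℕ) : Prop :=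
  seqWord x i u.length = u

/-- `u` is a factor of the sequence `x`. -/
def IsFactor {A : Type*} (x : ℕ → A) (u : List A) : Prop :=
  ∃ i, occursAt x u i

/-- `u` is a prefix of the sequence `x`. -/
def IsPrefixSeq {A : Type*} (u : List A) (x : ℕ → A) : Prop :=
  occursAt x u 0

/-- `x` is uniformly recurrent: every factor occurs in every sufficiently long window. -/
def UnifRec {A : Type*} (x : ℕ → A) : Prop :=
  ∀ u : List A, IsFactor x u → ∃ C, ∀ i, ∃ j, i ≤ j ∧ j < i + C ∧ occursAt x u j

/-- `w` is a return word to `u` in `x`: the factor between two consecutive occurrences of `u`. -/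
def IsReturnWord {A : Type*} (x : ℕ → A) (u w : List A) : Prop :=
  ∃ i j, i < j ∧ occursAt x u i ∧ occursAt x u j ∧
    (∀ k, i < k → k < j → ¬ occursAt x u k) ∧ w = seqWord x i (j - i)

/-- Apply a morphism (given on letters) to a word, by concatenation. -/
def morphApply {I A : Type*} (θ : I → List A) (l : List I) : List A :=
  (l.map θ).flatten

/-- Iterate an endomorphism `σ` of the free monoid `n` times on a word. -/
def morphIter {A : Type*} (σ : A → List A) : ℕ → List A → List A
  | 0, l => l
  | n + 1, l => morphApply σ (morphIter σ n l)

/-- `x` is ultimately periodic. -/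
def UltPeriodic {A : Type*} (x : ℕ → A) : Prop :=
  ∃ p > 0, ∃ N, ∀ n ≥ N, x (n + p) = x n

/-- `x` is linearly recurrent with constant `K`: it is uniformly recurrent and two
successive occurrences of any nonempty factor `u` differ by at most `K * |u|`. -/
def LinRec {A : Type*} (K : ℕ) (x : ℕ → A) : Prop :=
  UnifRec x ∧ ∀ u : List A, u ≠ [] → IsFactor x u →
    ∀ i, occursAt x u i → ∃ j, i < j ∧ j ≤ i + K * u.length ∧ occursAt x u j

/-- `σ` is prolongable on the letter `a`. -/
def Prolongable {A : Type*} (σ : A → List A) (a : A) : Prop :=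
  (∃ t, σ a = a :: t ∧ t ≠ []) ∧
    Filter.Tendsto (fun n => (morphIter σ n [a]).length) Filter.atTop Filter.atTop

/-- `σ` is growing: the image of each letter has length tending to infinity. -/
def Growing {A : Type*} (σ : A → List A) : Prop :=
  ∀ a, Filter.Tendsto (fun n => (morphIter σ n [a]).length) Filter.atTop Filter.atTop

/-- `σ` is primitive: some power sends every letter to a word containing every letter. -/
def Primitive {A : Type*} (σ : A → List A) : Prop :=
  ∃ n > 0, ∀ a b : A, b ∈ morphIter σ n [a]

/-- `x` is the fixed point `σ^∞(a)` of `σ`, prolongable on `a`. -/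
def IsFixedPointOf {A : Type*} (σ : A → List A) (a : A) (x : ℕ → A) : Prop :=
  x 0 = a ∧ ∀ n, IsPrefixSeq (morphIter σ n [a]) x

/-- The word `w` belongs to the language of the endomorphism `σ`. -/
def InLang {A : Type*} (σ : A → List A) (w : List A) : Prop :=
  ∃ a n, w <:+: morphIter σ n [a]

/-- The word `u` occurs at position `i` in the word `w`. -/
def listOccursAt {A : Type*} (w u : List A) (i : ℕ) : Prop :=
  i + u.length ≤ w.length ∧ (w.drop i).take u.length = u

/-- `|σ^k|`: the maximal length of the image of a letter under `σ^k`. -/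
def maxLen {A : Type*} [Fintype A] [Nonempty A] (σ : A → List A) (k : ℕ) : ℕ :=
  Finset.univ.sup' Finset.univ_nonempty (fun a => (morphIter σ k [a]).length)

/-- `⟨σ^k⟩`: the minimal length of the image of a letter under `σ^k`. -/
def minLen {A : Type*} [Fintype A] [Nonempty A] (σ : A → List A) (k : ℕ) : ℕ :=
  Finset.univ.inf' Finset.univ_nonempty (fun a => (morphIter σ k [a]).length)

/-- `(R, θ, z)` is the derived-sequence data of `x` on the prefix `u`: `θ 0, …, θ (R-1)`
enumerate the return words to `u` in order of first appearance in `x`, `z` is the derived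
sequence, i.e. the coding of the decomposition of `x` into return words to `u`,
so that `Θ_{x,u}(z) = x`. -/
def IsDerivedSeq {A : Type*} (x : ℕ → A) (u : List A) (R : ℕ)
    (θ : ℕ → List A) (z : ℕ → ℕ) : Prop :=
  (∀ i < R, IsReturnWord x u (θ i)) ∧
  (∀ w, IsReturnWord x u w → ∃ i < R, θ i = w) ∧
  (∀ i < R, ∀ j < R, i < j →
      sInf {k | occursAt x (θ i) k} < sInf {k | occursAt x (θ j) k}) ∧
  (∀ k, z k < R) ∧
  (∀ n, IsPrefixSeq (morphApply θ (seqWord z 0 n)) x)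


section AuxReturnBound

open Classical

variable {A : Type*}

theorem seqWord_length (x : ℕ → A) (i n : ℕ) : (seqWord x i n).length = n := by
  simp [seqWord]

theorem seqWord_getElem (x : ℕ → A) {i n k : ℕ} (h : k < (seqWord x i n).length) :
    (seqWord x i n)[k] = x (i + k) := by
  simp [seqWord]

theorem occursAt_iff {x : ℕ → A} {v : List A} {t : ℕ} :
    occursAt x v t ↔ ∀ k (hk : k < v.length), x (t + k) = v[k] := by
  unfold occursAt
  constructor
  · intro h k hk
    have h2 := List.getElem_of_eq h.symm hk
    rw [h2, seqWord_getElem]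
  · intro h
    apply List.ext_getElem (by simp [seqWord_length])
    intro k h1 h2
    rw [seqWord_getElem]
    exact h k h2

theorem occursAt_seqWord (x : ℕ → A) (i n : ℕ) : occursAt x (seqWord x i n) i := by
  rw [occursAt_iff]
  intro k hk
  rw [seqWord_getElem]

theorem occ_seqWord_eval {x : ℕ → A} {i n t : ℕ} (h : occursAt x (seqWord x i n) t) :
    ∀ m, m < n → x (t + m) = x (i + m) := by
  intro m hm
  have hm' : m < (seqWord x i n).length := by simpa [seqWord_length] using hm
  have := occursAt_iff.mp h m hm'
  rwa [seqWord_getElem] at this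

theorem seqWord_append (x : ℕ → A) (i n : ℕ) :
    seqWord x i (n + 1) = seqWord x i n ++ [x (i + n)] := by
  simp [seqWord, List.range_succ]

theorem seqWord_cons (x : ℕ → A) (i n : ℕ) :
    seqWord x i (n + 1) = x i :: seqWord x (i + 1) n := by
  apply List.ext_getElem (by simp [seqWord_length])
  intro k h1 h2
  rw [seqWord_getElem]
  rcases k with _ | k
  · simp
  · rw [List.getElem_cons_succ, seqWord_getElem]
    congr 1
    omega

theorem seqWord_take (x : ℕ → A) (i n : ℕ) :
    (seqWord x i (n + 1)).take n = seqWord x i n := by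
  have h : (seqWord x i n ++ [x (i + n)]).take (seqWord x i n).length = seqWord x i n :=
    List.take_left
  rw [seqWord_length] at h
  rw [seqWord_append]
  exact h

theorem seqWord_eq_ofFn (x : ℕ → A) (i n : ℕ) :
    seqWord x i n = List.ofFn (fun k : Fin n => x (i + k)) := by
  apply List.ext_getElem (by simp [seqWord_length])
  intro k h1 h2
  rw [seqWord_getElem, List.getElem_ofFn]

theorem seqWord_range_finite [Finite A] (x : ℕ → A) (n : ℕ) :
    (Set.range fun k => seqWord x k n).Finite := by
  have hsub : (Set.range fun k => seqWord x k n) ⊆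
      Set.range (fun g : Fin n → A => List.ofFn g) := by
    rintro _ ⟨k, rfl⟩
    exact ⟨_, (seqWord_eq_ofFn x k n).symm⟩
  exact (Set.finite_range _).subset hsub

/-- Forward syndeticity: from any position at or after an occurrence of `v`,
there is an occurrence of `v` within `K * |v|`. -/
theorem occ_forward {K : ℕ} {x : ℕ → A} (hK : LinRec K x) {v : List A} (hv : v ≠ [])
    {k : ℕ} (hocc : occursAt x v k) :
    ∀ i, k ≤ i → ∃ j, i ≤ j ∧ j ≤ i + K * v.length ∧ occursAt x v j := by
  intro i hi
  induction i, hi using Nat.le_induction with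
  | base => exact ⟨k, le_rfl, Nat.le_add_right _ _, hocc⟩
  | succ i hi ih =>
    obtain ⟨j, h1, h2, h3⟩ := ih
    rcases Nat.lt_or_ge i j with hij | hij
    · exact ⟨j, hij, by omega, h3⟩
    · obtain ⟨j', hj1, hj2, hj3⟩ := hK.2 v hv ⟨k, hocc⟩ j h3
      exact ⟨j', by omega, by omega, hj3⟩

/-- Upper bound: any return word to `u` has length at most `K * |u|` (and is nonempty). -/
theorem returnWord_length_le {K : ℕ} {x : ℕ → A} (hK : LinRec K x) {u w : List A}
    (hu : u ≠ []) (h : IsReturnWord x u w) :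
    w.length ≤ K * u.length ∧ 0 < w.length := by
  obtain ⟨i, j, hij, hoi, hoj, hmid, rfl⟩ := h
  rw [seqWord_length]
  obtain ⟨j', h1, h2, h3⟩ := hK.2 u hu ⟨i, hoi⟩ i hoi
  have hjj : j ≤ j' := by
    by_contra hlt
    push_neg at hlt
    exact hmid j' h1 hlt h3
  constructor <;> omega

/-- Morse–Hedlund style: if the number of windows of some positive length `p`
is at most `p`, then `x` is ultimately periodic. -/
theorem ult_periodic_of_ncard_le [Finite A] {x : ℕ → A} {p : ℕ} (hp : 1 ≤ p)
    (hcard : (Set.range fun k => seqWord x k p).ncard ≤ p) : UltPeriodic x := by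
  classical
  set F : ℕ → Set (List A) := fun n => Set.range fun k => seqWord x k n with hF
  have hFin : ∀ n, (F n).Finite := fun n => seqWord_range_finite x n
  have himg : ∀ n, F n = (fun l : List A => l.take n) '' F (n + 1) := by
    intro n
    ext v
    constructor
    · rintro ⟨k, rfl⟩
      exact ⟨seqWord x k (n + 1), ⟨k, rfl⟩, seqWord_take x k n⟩
    · rintro ⟨-, ⟨k, rfl⟩, rfl⟩
      exact ⟨k, (seqWord_take x k n).symm⟩
  have hmono : ∀ n, (F n).ncard ≤ (F (n + 1)).ncard := by
    intro n
    rw [himg n]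
    exact Set.ncard_image_le (hFin _)
  have hmono2 : ∀ a b, a ≤ b → (F a).ncard ≤ (F b).ncard := by
    intro a b hab
    induction b, hab using Nat.le_induction with
    | base => exact le_rfl
    | succ b hb ih => exact ih.trans (hmono b)
  -- key case analysis
  have hcases : (∃ m, 1 ≤ m ∧ m ≤ p ∧ (F (m + 1)).ncard ≤ (F m).ncard) ∨ (F 1).ncard ≤ 1 := by
    by_contra hc
    push_neg at hc
    obtain ⟨hstrict, h1⟩ := hc
    have hgrow : ∀ m, 1 ≤ m → m ≤ p → m + 1 ≤ (F m).ncard := by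
      intro m hm1
      induction m with
      | zero => omega
      | succ m ih =>
        intro hmp
        rcases Nat.lt_or_ge 1 (m + 1) with hm | hm
        · have hm' : 1 ≤ m := by omega
          have := ih hm' (by omega)
          have hst := hstrict m hm' (by omega)
          omega
        · have hm0 : m = 0 := by omega
          subst hm0
          norm_num
          omega
    have h2 := hgrow p hp le_rfl
    have h3 : (F p).ncard ≤ p := hcard
    omega
  rcases hcases with ⟨m, hm1, hmp, hle⟩ | hconst
  · -- determinism at length m
    have heq : ((fun l : List A => l.take m) '' F (m + 1)).ncard = (F (m + 1)).ncard := by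
      have h1 : ((fun l : List A => l.take m) '' F (m + 1)).ncard = (F m).ncard := by
        rw [← himg m]
      have h2 : (F m).ncard ≤ (F (m + 1)).ncard := hmono m
      omega
    have hinj : Set.InjOn (fun l : List A => l.take m) (F (m + 1)) :=
      Set.injOn_of_ncard_image_eq heq (hFin (m + 1))
    have hdet : ∀ k1 k2, seqWord x k1 m = seqWord x k2 m → x (k1 + m) = x (k2 + m) := by
      intro k1 k2 he
      have h1 : (fun l : List A => l.take m) (seqWord x k1 (m + 1)) =
          (fun l : List A => l.take m) (seqWord x k2 (m + 1)) := by
        simp only [seqWord_take]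
        exact he
      have h2 := hinj ⟨k1, rfl⟩ ⟨k2, rfl⟩ h1
      have e1 : x (k1 + m) = (seqWord x k1 (m + 1))[m]'(by simp [seqWord_length]) :=
        (seqWord_getElem x (by simp [seqWord_length])).symm
      rw [e1, List.getElem_of_eq h2, seqWord_getElem]
    have hshift : ∀ k1 k2, seqWord x k1 m = seqWord x k2 m →
        ∀ jj, seqWord x (k1 + jj) m = seqWord x (k2 + jj) m := by
      intro k1 k2 he jj
      induction jj with
      | zero => simpa using he
      | succ jj ih =>
        have hx := hdet _ _ ih
        have hfull : seqWord x (k1 + jj) (m + 1) = seqWord x (k2 + jj) (m + 1) := by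
          rw [seqWord_append, seqWord_append, ih, hx]
        rw [seqWord_cons, seqWord_cons] at hfull
        have h2 := ((List.cons.injEq _ _ _ _).mp hfull).2
        have e1 : k1 + (jj + 1) = k1 + jj + 1 := by omega
        have e2 : k2 + (jj + 1) = k2 + jj + 1 := by omega
        rw [e1, e2]
        exact h2
    have key : ∀ k1 k2 : ℕ, k1 < k2 → seqWord x k1 m = seqWord x k2 m → UltPeriodic x := by
      intro k1 k2 hlt he
      refine ⟨k2 - k1, by omega, k1, ?_⟩
      intro n hn
      have hsh := hshift k1 k2 he (n - k1)
      have e1 : k1 + (n - k1) = n := by omega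
      have e2 : k2 + (n - k1) = n + (k2 - k1) := by omega
      rw [e1, e2] at hsh
      have a1 : (seqWord x n m)[0]'(by rw [seqWord_length]; omega) = x (n + 0) :=
        seqWord_getElem x (by rw [seqWord_length]; omega)
      rw [List.getElem_of_eq hsh, seqWord_getElem] at a1
      simpa using a1
    -- pigeonhole among the first p+1 windows of length m
    have hcm : (F m).ncard ≤ p := (hmono2 m p hmp).trans hcard
    have hclt : (F m).ncard < (Set.Iio (p + 1)).ncard := by
      rw [← Finset.coe_Iio, Set.ncard_coe_finset, Nat.card_Iio]
      omega
    obtain ⟨k1, hk1, k2, hk2, hne, heqw⟩ :=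
      Set.exists_ne_map_eq_of_ncard_lt_of_maps_to (s := Set.Iio (p + 1))
        (f := fun k => seqWord x k m) hclt (fun a _ => ⟨a, rfl⟩) (hFin m)
    rcases hne.lt_or_gt with h | h
    · exact key _ _ h heqw
    · exact key _ _ h heqw.symm
  · -- all length-1 windows equal: x is constant
    have hxc : ∀ k : ℕ, x k = x 0 := by
      intro k
      have h1 : seqWord x k 1 ∈ F 1 := ⟨k, rfl⟩
      have h2 : seqWord x 0 1 ∈ F 1 := ⟨0, rfl⟩
      have heq1 : seqWord x k 1 = seqWord x 0 1 :=
        (Set.ncard_le_one (hFin 1)).mp hconst _ h1 _ h2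
      have a1 : (seqWord x k 1)[0]'(by simp [seqWord_length]) = x (k + 0) :=
        seqWord_getElem x (by simp [seqWord_length])
      rw [List.getElem_of_eq heq1, seqWord_getElem] at a1
      simpa using a1.symm
    exact ⟨1, one_pos, 0, fun n _ => by rw [hxc (n + 1), hxc n]⟩

/-- Lower bound: if `x` is not ultimately periodic, any return word `w` to a
nonempty factor `u` satisfies `|u| ≤ K * |w|`. -/
theorem returnWord_length_lower [Fintype A] {K : ℕ} {x : ℕ → A}
    (hK : LinRec K x) (hnp : ¬ UltPeriodic x) {u w : List A}
    (hu : u ≠ []) (h : IsReturnWord x u w) : u.length ≤ K * w.length := by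
  by_contra hcon
  push_neg at hcon
  exfalso
  apply hnp
  obtain ⟨i, j, hij, hoi, hoj, hmid, rfl⟩ := h
  rw [seqWord_length] at hcon
  set p := j - i with hpdef
  set Kp := K * p with hKpdef
  have hp1 : 1 ≤ p := by omega
  have hKp : Kp < u.length := hcon
  -- the region `[i, i + |u| + p)` is `p`-periodic
  have hreg : ∀ k, k < u.length → x (i + k + p) = x (i + k) := by
    intro k hk
    have e1 := occursAt_iff.mp hoi k hk
    have e2 := occursAt_iff.mp hoj k hk
    have e3 : i + k + p = j + k := by omega
    rw [e3, e2, ← e1]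
  have hper : ∀ l, l < Kp + p → x (i + l) = x (i + l % p) := by
    intro l
    induction l using Nat.strong_induction_on with
    | _ l ih =>
      intro hl
      rcases Nat.lt_or_ge l p with h1 | h1
      · rw [Nat.mod_eq_of_lt h1]
      · have h2 : l - p < u.length := by omega
        have hx := hreg (l - p) h2
        have el : i + (l - p) + p = i + l := by omega
        rw [el] at hx
        have hmod : l % p = (l - p) % p := by
          conv_lhs => rw [← Nat.sub_add_cancel h1]
          rw [Nat.add_mod_right]
        rw [hx, ih (l - p) (by omega) (by omega), hmod]
  -- every window of length `p` is one of the `p` "rotations" of the periodic block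
  have hZ : IsFactor x (seqWord x i (Kp + p)) := ⟨i, occursAt_seqWord x i _⟩
  obtain ⟨C, hC⟩ := hK.1 _ hZ
  have hclass : ∀ k, ∃ d, d < p ∧
      seqWord x k p = seqWord (fun l => x (i + l % p)) d p := by
    intro k
    obtain ⟨t, htk, -, ht⟩ := hC k
    have hvne : seqWord x k p ≠ [] := by
      intro hnil
      have hlen0 := congrArg List.length hnil
      rw [seqWord_length] at hlen0
      simp at hlen0
      omega
    obtain ⟨j', hj1, hj2, hj3⟩ := occ_forward hK hvne (occursAt_seqWord x k p) t htk
    rw [seqWord_length] at hj2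
    refine ⟨(j' - t) % p, Nat.mod_lt _ (by omega), ?_⟩
    apply List.ext_getElem (by simp [seqWord_length])
    intro mm h1 h2
    rw [seqWord_getElem, seqWord_getElem]
    have hmmp : mm < p := by simpa [seqWord_length] using h1
    have e1 : x (k + mm) = x (j' + mm) := (occ_seqWord_eval hj3 mm hmmp).symm
    have hb : j' - t + mm < Kp + p := by omega
    have e2 : x (j' + mm) = x (t + (j' - t + mm)) := by congr 1; omega
    have e3 : x (t + (j' - t + mm)) = x (i + (j' - t + mm)) := occ_seqWord_eval ht _ hb
    have e4 : x (i + (j' - t + mm)) = x (i + (j' - t + mm) % p) := hper _ hb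
    show x (k + mm) = x (i + ((j' - t) % p + mm) % p)
    rw [e1, e2, e3, e4, Nat.mod_add_mod]
  apply ult_periodic_of_ncard_le hp1
  have hsub : (Set.range fun k => seqWord x k p) ⊆
      (fun d => seqWord (fun l => x (i + l % p)) d p) '' (Set.Iio p) := by
    rintro _ ⟨k, rfl⟩
    obtain ⟨d, hd, he⟩ := hclass k
    exact ⟨d, hd, he.symm⟩
  calc (Set.range fun k => seqWord x k p).ncard
      ≤ ((fun d => seqWord (fun l => x (i + l % p)) d p) '' (Set.Iio p)).ncard :=
        Set.ncard_le_ncard hsub ((Set.finite_Iio p).image _)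
    _ ≤ (Set.Iio p).ncard := Set.ncard_image_le (Set.finite_Iio p)
    _ = p := by rw [← Finset.coe_Iio, Set.ncard_coe_finset, Nat.card_Iio]


end AuxReturnBound

/-- Corollary: for a primitive substitution `σ` prolongable on `a` whose fixed point
`x = σ^∞(a)` is non-periodic and linearly recurrent with constant `K_σ`, and for every
non-empty prefix `u` of `x` with `u` a prefix of `σ(u)`, the return substitution `σu`
(satisfying `Θ_{x,u} ∘ σu = σ ∘ Θ_{x,u}`) satisfies `|σu| ≤ |σ|·K_σ²`. -/
theorem return_substitution_length_bound {A : Type*} [Fintype A] [Nonempty A]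
    (σ : A → List A) (a : A)
    (hprim : Primitive σ) (hgrow : Growing σ) (hprol : Prolongable σ a)
    (x : ℕ → A) (hx : IsFixedPointOf σ a x) (hnp : ¬ UltPeriodic x)
    (K : ℕ) (hK : LinRec K x)
    (u : List A) (hu : u ≠ []) (hup : IsPrefixSeq u x)
    (huσ : u <+: morphApply σ u)
    (R : ℕ) (θ : ℕ → List A) (z : ℕ → ℕ) (hd : IsDerivedSeq x u R θ z)
    (σu : ℕ → List ℕ)
    (hσu1 : ∀ i < R, ∀ j ∈ σu i, j < R)
    (hσu2 : ∀ i < R, morphApply θ (σu i) = morphApply σ (θ i)) :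
    ∀ i < R, (σu i).length ≤ maxLen σ 1 * K ^ 2 := by
  intro i hi
  have hulen : 0 < u.length := List.length_pos_iff.mpr hu
  have hσa : ∀ a : A, (σ a).length ≤ maxLen σ 1 := by
    intro a
    have h1 : morphIter σ 1 [a] = σ a := by
      simp [morphIter, morphApply]
    have h2 := Finset.le_sup' (fun a : A => (morphIter σ 1 [a]).length) (Finset.mem_univ a)
    rw [h1] at h2
    exact h2
  have hret : IsReturnWord x u (θ i) := hd.1 i hi
  obtain ⟨hθup, hθpos⟩ := returnWord_length_le hK hu hret
  have hlen : (morphApply θ (σu i)).length = ((σu i).map (fun j => (θ j).length)).sum := by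
    simp [morphApply, List.map_map, Function.comp_def]
  have hupper : (morphApply σ (θ i)).length ≤ (θ i).length * maxLen σ 1 := by
    have he : (morphApply σ (θ i)).length = ((θ i).map (fun a => (σ a).length)).sum := by
      simp [morphApply, List.map_map, Function.comp_def]
    rw [he]
    have hb := List.sum_le_card_nsmul ((θ i).map (fun a => (σ a).length)) (maxLen σ 1) ?_
    · simpa [smul_eq_mul] using hb
    · intro e he2
      obtain ⟨a, ha, rfl⟩ := List.mem_map.mp he2
      exact hσa a
  have hlow : (σu i).length * u.length ≤ K * (morphApply θ (σu i)).length := by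
    have h1 : ∀ e ∈ (σu i).map (fun j => K * (θ j).length), u.length ≤ e := by
      intro e he2
      obtain ⟨j, hj, rfl⟩ := List.mem_map.mp he2
      exact returnWord_length_lower hK hnp hu (hd.1 j (hσu1 i hi j hj))
    have h2 := List.card_nsmul_le_sum ((σu i).map (fun j => K * (θ j).length)) u.length h1
    rw [List.length_map, smul_eq_mul] at h2
    calc (σu i).length * u.length ≤ ((σu i).map (fun j => K * (θ j).length)).sum := h2
      _ = K * ((σu i).map (fun j => (θ j).length)).sum :=
          List.sum_map_mul_left (σu i) (fun j => ((θ j).length : ℕ)) K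
      _ = K * (morphApply θ (σu i)).length := by rw [hlen]
  rw [hσu2 i hi] at hlow
  have hchain : (σu i).length * u.length ≤ (maxLen σ 1 * K ^ 2) * u.length := by
    calc (σu i).length * u.length ≤ K * (morphApply σ (θ i)).length := hlow
      _ ≤ K * ((θ i).length * maxLen σ 1) := Nat.mul_le_mul le_rfl hupper
      _ ≤ K * ((K * u.length) * maxLen σ 1) :=
          Nat.mul_le_mul le_rfl (Nat.mul_le_mul hθup le_rfl)
      _ = (maxLen σ 1 * K ^ 2) * u.length := by ring
  exact Nat.le_of_mul_le_mul_right hchain hulen
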